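/- In the game with rules a → ε, a^2 → ε, a^3 → ε, b → ε over {a,b}, with S(w) ∈ (ℤ/2)^3 defined as ((k + α_1) mod 2, α_2 mod 2, α_3 mod 2) from the block decomposition (α_r counting a-blocks of length ≡ r mod 4, k the number of b's), no single move changes S(w) by the vector (0,0,0) or by (1,1,1); equivalently, if w → w' then S(w') − S(w) ∉ {(0,0,0),(1,1,1)}. -/

import Mathlib

inductive AB | a | b
deriving DecidableEq

/-- One move of the game `{a → ε, a² → ε, a³ → ε, b → ε}`. -/
def Step (w w' : List AB) : Prop :=
  ∃ x y : List AB, w' = x ++ y ∧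
    (w = x ++ [AB.a] ++ y ∨ w = x ++ [AB.a, AB.a] ++ y ∨
     w = x ++ [AB.a, AB.a, AB.a] ++ y ∨ w = x ++ [AB.b] ++ y)

/-- The lengths `i_0, …, i_k` of the (possibly empty) maximal blocks of `a`'s in
the decomposition `w = a^{i_0} b a^{i_1} b ⋯ b a^{i_k}`. -/
def blocks (w : List AB) : List ℕ := (w.splitOn AB.b).map List.length

/-- `α_r`: the number of blocks of `a`'s whose length is `≡ r (mod 4)`. -/
def alpha (w : List AB) (r : ℕ) : ℕ := (blocks w).countP (fun i => i % 4 == r)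

/-- `S(w) = ((k + α₁) mod 2, α₂ mod 2, α₃ mod 2)`, where `k = |w|_b`. -/
def S (w : List AB) : ZMod 2 × ZMod 2 × ZMod 2 :=
  (((w.count AB.b + alpha w 1 : ℕ) : ZMod 2),
   ((alpha w 2 : ℕ) : ZMod 2), ((alpha w 3 : ℕ) : ZMod 2))

/-! ### Auxiliary machinery -/

abbrev V := ZMod 2 × ZMod 2 × ZMod 2

def ee (r : ZMod 4) : V :=
  (if r = 1 then 1 else 0, if r = 2 then 1 else 0, if r = 3 then 1 else 0)

@[simp] lemma ee_eval0 : ee 0 = (0, 0, 0) := by decide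
@[simp] lemma ee_eval1 : ee 1 = (1, 0, 0) := by decide
@[simp] lemma ee_eval2 : ee 2 = (0, 1, 0) := by decide
@[simp] lemma ee_eval3 : ee 3 = (0, 0, 1) := by decide
@[simp] lemma ee_eval4 : ee 4 = (0, 0, 0) := by decide

def g : AB → (ZMod 4 × V) → (ZMod 4 × V)
  | AB.a, (r, s) => (r + 1, s + ee r + ee (r + 1))
  | AB.b, (_, s) => (0, s + (1, 0, 0))

def f (w : List AB) : ZMod 4 × V := w.foldr g (0, 0)

def Sb (k : ℕ) (l : List ℕ) : V :=
  (((k + l.countP (fun i => i % 4 == 1) : ℕ) : ZMod 2),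
   ((l.countP (fun i => i % 4 == 2) : ℕ) : ZMod 2),
   ((l.countP (fun i => i % 4 == 3) : ℕ) : ZMod 2))

lemma S_eq_Sb (w : List AB) : S w = Sb (w.count AB.b) (blocks w) := rfl

lemma blocks_exists (w : List AB) : ∃ h t, blocks w = h :: t := by
  unfold blocks
  rcases hs : w.splitOn AB.b with _ | ⟨c, cs⟩
  · exact absurd hs (List.splitOnP_ne_nil _ w)
  · exact ⟨c.length, cs.map List.length, rfl⟩

lemma blocks_cons_b (w : List AB) : blocks (AB.b :: w) = 0 :: blocks w := by
  unfold blocks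
  rw [List.splitOn, List.splitOnP_cons]
  simp [List.splitOn]

lemma blocks_cons_a (w : List AB) {h : ℕ} {t : List ℕ} (hb : blocks w = h :: t) :
    blocks (AB.a :: w) = (h + 1) :: t := by
  unfold blocks at hb ⊢
  rw [List.splitOn] at hb ⊢
  rw [List.splitOnP_cons]
  rcases hs : List.splitOnP (fun x => x == AB.b) w with _ | ⟨u, us⟩
  · exact absurd hs (List.splitOnP_ne_nil _ w)
  · rw [hs] at hb
    simp only [List.map_cons, List.cons.injEq] at hb
    simp [hb.1, hb.2]

lemma Sb_cons_succ (k h : ℕ) (t : List ℕ) :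
    Sb k ((h + 1) :: t) = Sb k (h :: t) + ee (h : ZMod 4) + ee ((h : ZMod 4) + 1) := by
  have hcast : ((h : ℕ) : ZMod 4) = ((h % 4 : ℕ) : ZMod 4) := (ZMod.natCast_mod h 4).symm
  have h4 : h % 4 = 0 ∨ h % 4 = 1 ∨ h % 4 = 2 ∨ h % 4 = 3 := by omega
  rcases h4 with h4 | h4 | h4 | h4 <;>
  · have h5 : (h + 1) % 4 = (h % 4 + 1) % 4 := by omega
    simp only [Sb, List.countP_cons]
    rw [hcast]
    simp only [h5, h4]
    norm_num [Prod.ext_iff]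
    try (and_intros <;> push_cast <;> ring)
    all_goals simp [show (2 : ZMod 2) = 0 from by decide]

lemma Sb_cons_zero (k : ℕ) (l : List ℕ) :
    Sb (k + 1) (0 :: l) = Sb k l + (1, 0, 0) := by
  simp only [Sb, List.countP_cons]
  norm_num [Prod.ext_iff]
  try (and_intros <;> push_cast <;> ring)

lemma f_eq (w : List AB) : f w = ((((blocks w).headI : ℕ) : ZMod 4), S w) := by
  induction w with
  | nil => decide
  | cons c w ih =>
    obtain ⟨h, t, hb⟩ := blocks_exists w
    cases c with
    | a =>
      have hb' := blocks_cons_a w hb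
      show g AB.a (f w) = _
      rw [ih, hb, hb']
      have hcount : (AB.a :: w).count AB.b = w.count AB.b := by
        rw [List.count_cons_of_ne (by simp)]
      simp only [g, List.headI, S_eq_Sb, hcount, hb, hb']
      rw [Sb_cons_succ]
      refine Prod.ext ?_ rfl
      push_cast
      ring
    | b =>
      have hb' := blocks_cons_b w
      show g AB.b (f w) = _
      rw [ih]
      have hcount : (AB.b :: w).count AB.b = w.count AB.b + 1 := List.count_cons_self
      simp only [g, List.headI, S_eq_Sb, hcount, hb, hb']
      rw [Sb_cons_zero]
      simp

lemma S_snd (w : List AB) : S w = (f w).2 := by rw [f_eq]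

/-- The reachable set of `(r(w), r(w'), S w - S w')` triples. -/
def Reach : List (ZMod 4 × ZMod 4 × ZMod 2 × ZMod 2 × ZMod 2) :=
  [(0, 0, 0, 0, 1),
   (0, 0, 0, 1, 0),
   (0, 0, 0, 1, 1),
   (0, 0, 1, 0, 0),
   (0, 0, 1, 0, 1),
   (0, 0, 1, 1, 0),
   (0, 1, 1, 0, 0),
   (0, 2, 0, 1, 0),
   (0, 2, 1, 0, 0),
   (0, 3, 0, 0, 1),
   (0, 3, 1, 0, 0),
   (1, 0, 0, 0, 1),
   (1, 0, 1, 0, 0),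
   (1, 1, 0, 0, 1),
   (1, 1, 0, 1, 0),
   (1, 1, 0, 1, 1),
   (1, 1, 1, 0, 0),
   (1, 1, 1, 0, 1),
   (1, 1, 1, 1, 0),
   (1, 2, 1, 1, 0),
   (1, 3, 0, 1, 1),
   (1, 3, 1, 0, 1),
   (2, 0, 0, 1, 0),
   (2, 0, 1, 0, 0),
   (2, 1, 0, 1, 1),
   (2, 1, 1, 1, 0),
   (2, 2, 0, 0, 1),
   (2, 2, 0, 1, 0),
   (2, 2, 0, 1, 1),
   (2, 2, 1, 0, 0),
   (2, 2, 1, 0, 1),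
   (2, 2, 1, 1, 0),
   (2, 3, 0, 1, 1),
   (3, 0, 0, 0, 1),
   (3, 1, 0, 1, 1),
   (3, 1, 1, 0, 1),
   (3, 2, 0, 1, 1),
   (3, 2, 1, 1, 0),
   (3, 3, 0, 0, 1),
   (3, 3, 0, 1, 0),
   (3, 3, 0, 1, 1),
   (3, 3, 1, 0, 0),
   (3, 3, 1, 0, 1),
   (3, 3, 1, 1, 0)]

def Invv (p q : ZMod 4 × V) : Prop := (p.1, q.1, p.2 - q.2) ∈ Reach

instance (p q : ZMod 4 × V) : Decidable (Invv p q) := by unfold Invv; infer_instance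

lemma inv_base : ∀ q : ZMod 4 × V,
    Invv (g AB.b q) q ∧ Invv (g AB.a q) q ∧ Invv (g AB.a (g AB.a q)) q ∧
      Invv (g AB.a (g AB.a (g AB.a q))) q := by decide

lemma inv_closed : ∀ p q : ZMod 4 × V, Invv p q →
    Invv (g AB.a p) (g AB.a q) ∧ Invv (g AB.b p) (g AB.b q) := by decide

lemma inv_goal : ∀ p q : ZMod 4 × V, Invv p q →
    q.2 - p.2 ≠ (0, 0, 0) ∧ q.2 - p.2 ≠ (1, 1, 1) := by decide

lemma inv_foldr (x : List AB) (p q : ZMod 4 × V) (h : Invv p q) :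
    Invv (x.foldr g p) (x.foldr g q) := by
  induction x with
  | nil => exact h
  | cons c x ih =>
    cases c
    · exact (inv_closed _ _ ih).1
    · exact (inv_closed _ _ ih).2

lemma final (x y seg : List AB) (hb : Invv (seg.foldr g (f y)) (f y)) :
    S (x ++ y) - S (x ++ seg ++ y) ≠ (0, 0, 0) ∧
      S (x ++ y) - S (x ++ seg ++ y) ≠ (1, 1, 1) := by
  have key : Invv (f (x ++ seg ++ y)) (f (x ++ y)) := by
    have e1 : f (x ++ seg ++ y) = x.foldr g (seg.foldr g (f y)) := by
      simp [f, List.foldr_append]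
    have e2 : f (x ++ y) = x.foldr g (f y) := by simp [f]
    rw [e1, e2]
    exact inv_foldr x _ _ hb
  have hg := inv_goal _ _ key
  rw [S_snd (x ++ y), S_snd (x ++ seg ++ y)]
  exact hg

theorem stmt13 :
    ∀ w w' : List AB, Step w w' →
      S w' - S w ≠ (0, 0, 0) ∧ S w' - S w ≠ (1, 1, 1) := by
  rintro w w' ⟨x, y, hw', hcases⟩
  subst hw'
  rcases hcases with h | h | h | h <;> subst h
  · exact final x y _ (inv_base (f y)).2.1
  · exact final x y _ (inv_base (f y)).2.2.1
  · exact final x y _ (inv_base (f y)).2.2.2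
  · exact final x y _ (inv_base (f y)).1
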